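/- (Identifiability of the secret key for a fixed permutation.) Let V be finite with |V| ≥ 2 and fix a permutation π of V. If ξ, ξ' ∈ (0,1) and S(p, ξ, π) = S(p, ξ', π) for every probability distribution p on V, then ξ = ξ'. -/

import Mathlib

open Finset MeasureTheory
open scoped Classical

variable {V : Type*}

/-- Cumulative sum of probabilities of the first `k` tokens under permutation `π`. -/
noncomputable def cdf [Fintype V] (p : V → ℝ) (π : Fin (Fintype.card V) ≃ V) (k : ℕ) : ℝ :=
  ∑ i ∈ Finset.univ.filter (fun i : Fin (Fintype.card V) => (i : ℕ) < k), p (π i)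

/-- The least index `k` (if any) such that `C_{k+1} ≥ ξ` (0-indexed). -/
noncomputable def selIdx [Fintype V] (p : V → ℝ) (ξ : ℝ)
    (π : Fin (Fintype.card V) ≃ V) : Option (Fin (Fintype.card V)) :=
  let s := Finset.univ.filter (fun k : Fin (Fintype.card V) => ξ ≤ cdf p π ((k : ℕ) + 1))
  if h : s.Nonempty then some (s.min' h) else none

/-- The inverse-transform-sampling selection function `S(p, ξ, π)`. -/
noncomputable def sel [Fintype V] [Nonempty V] (p : V → ℝ) (ξ : ℝ)
    (π : Fin (Fintype.card V) ≃ V) : V :=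
  ((selIdx p ξ π).map π).getD (Classical.arbitrary V)

/-- The reversed permutation: `reverse(π)(i) = π(n+1-i)` (1-indexed). -/
def revp [Fintype V] (π : Fin (Fintype.card V) ≃ V) : Fin (Fintype.card V) ≃ V :=
  Fin.revPerm.trans π

lemma stmt3_aux [Fintype V] [Nonempty V] (h2 : 2 ≤ Fintype.card V)
    (π : Fin (Fintype.card V) ≃ V) (ξ ξ' : ℝ)
    (hξ0 : 0 < ξ) (hlt : ξ < ξ') (hξ'1 : ξ' < 1)
    (h : ∀ p : V → ℝ, (∀ v, 0 ≤ p v) → (∑ v, p v = 1) → sel p ξ π = sel p ξ' π) :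
    False := by
  have h0 : 0 < Fintype.card V := by omega
  have h1 : 1 < Fintype.card V := by omega
  set i0 : Fin (Fintype.card V) := ⟨0, h0⟩ with hi0
  set i1 : Fin (Fintype.card V) := ⟨1, h1⟩ with hi1
  have hne : i0 ≠ i1 := by simp [hi0, hi1, Fin.ext_iff]
  set c : ℝ := (ξ + ξ') / 2 with hc
  have hc1 : ξ ≤ c := by rw [hc]; linarith
  have hc2 : c < ξ' := by rw [hc]; linarith
  have hc0 : 0 < c := by rw [hc]; linarith
  have hc3 : c < 1 := by rw [hc]; linarith
  set p : V → ℝ := fun v =>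
    if π.symm v = i0 then c else if π.symm v = i1 then 1 - c else 0 with hp
  have hpπ : ∀ i, p (π i) = if i = i0 then c else if i = i1 then 1 - c else 0 := by
    intro i; simp [hp]
  have hnn : ∀ v, 0 ≤ p v := by
    intro v; simp only [hp]; split_ifs <;> linarith
  have hsum : ∑ v, p v = 1 := by
    rw [← π.sum_comp]
    have key : ∀ i : Fin (Fintype.card V),
        p (π i) = (if i = i0 then c else 0) + (if i = i1 then 1 - c else 0) := by
      intro i
      rw [hpπ]
      by_cases hA : i = i0
      · subst hA; simp [hne]
      · simp [hA]
    rw [Finset.sum_congr rfl fun i _ => key i, Finset.sum_add_distrib]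
    simp [Finset.sum_ite_eq']
  have hfilter1 : Finset.univ.filter (fun i : Fin (Fintype.card V) => (i : ℕ) < 1) = {i0} := by
    ext i
    simp only [Finset.mem_filter, Finset.mem_univ, true_and, Finset.mem_singleton, Fin.ext_iff, hi0]
    omega
  have hcdf1 : cdf p π 1 = c := by
    rw [cdf, hfilter1, Finset.sum_singleton, hpπ, if_pos rfl]
  have hfilter2 : Finset.univ.filter (fun i : Fin (Fintype.card V) => (i : ℕ) < 2) = {i0, i1} := by
    ext i; simp only [Finset.mem_filter, Finset.mem_univ, true_and, Finset.mem_insert, Finset.mem_singleton, Fin.ext_iff, hi0, hi1, Fin.val_mk]; omega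
  have hcdf2 : cdf p π 2 = 1 := by
    rw [cdf, hfilter2, Finset.sum_pair hne, hpπ, hpπ, if_pos rfl, if_neg (Ne.symm hne),
      if_pos rfl]
    ring
  -- selection for ξ is i0
  have hmem0 : i0 ∈ Finset.univ.filter
      (fun k : Fin (Fintype.card V) => ξ ≤ cdf p π ((k : ℕ) + 1)) := by
    simp only [Finset.mem_filter, Finset.mem_univ, true_and]
    show ξ ≤ cdf p π (0 + 1)
    rw [Nat.zero_add, hcdf1]; exact hc1
  have hs0 : (Finset.univ.filter
      (fun k : Fin (Fintype.card V) => ξ ≤ cdf p π ((k : ℕ) + 1))).Nonempty := ⟨i0, hmem0⟩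
  have hselIdx0 : selIdx p ξ π = some i0 := by
    rw [selIdx]
    simp only [dif_pos hs0]
    congr 1
    exact le_antisymm (Finset.min'_le _ _ hmem0) (Fin.le_def.mpr (Nat.zero_le _))
  -- selection for ξ' is i1
  have hmem1 : i1 ∈ Finset.univ.filter
      (fun k : Fin (Fintype.card V) => ξ' ≤ cdf p π ((k : ℕ) + 1)) := by
    simp only [Finset.mem_filter, Finset.mem_univ, true_and]
    show ξ' ≤ cdf p π (1 + 1)
    rw [hcdf2]; linarith
  have hs1 : (Finset.univ.filter
      (fun k : Fin (Fintype.card V) => ξ' ≤ cdf p π ((k : ℕ) + 1))).Nonempty := ⟨i1, hmem1⟩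
  have hselIdx1 : selIdx p ξ' π = some i1 := by
    rw [selIdx]
    simp only [dif_pos hs1]
    congr 1
    refine le_antisymm (Finset.min'_le _ _ hmem1) ?_
    have hmmem := Finset.min'_mem _ hs1
    set m := (Finset.univ.filter
      (fun k : Fin (Fintype.card V) => ξ' ≤ cdf p π ((k : ℕ) + 1))).min' hs1 with hm
    simp only [Finset.mem_filter, Finset.mem_univ, true_and] at hmmem
    have hm0 : (m : ℕ) ≠ 0 := by
      intro hz
      have : ξ' ≤ cdf p π 1 := by rwa [hz, Nat.zero_add] at hmmem
      rw [hcdf1] at this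
      linarith
    rw [Fin.le_def]
    show 1 ≤ (m : ℕ)
    omega
  have hfin := h p hnn hsum
  rw [sel, sel, hselIdx0, hselIdx1] at hfin
  simp only [Option.map_some, Option.getD_some] at hfin
  exact hne (π.injective hfin)

/-- identifiability of the secret key for a fixed permutation. -/
theorem stmt3 [Fintype V] [Nonempty V] (h2 : 2 ≤ Fintype.card V)
    (π : Fin (Fintype.card V) ≃ V) (ξ ξ' : ℝ)
    (hξ0 : 0 < ξ) (hξ1 : ξ < 1) (hξ'0 : 0 < ξ') (hξ'1 : ξ' < 1)
    (h : ∀ p : V → ℝ, (∀ v, 0 ≤ p v) → (∑ v, p v = 1) → sel p ξ π = sel p ξ' π) :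
    ξ = ξ' := by
  rcases lt_trichotomy ξ ξ' with hl | he | hg
  · exact absurd (stmt3_aux h2 π ξ ξ' hξ0 hl hξ'1 h) not_false
  · exact he
  · exact absurd (stmt3_aux h2 π ξ' ξ hξ'0 hg hξ1 fun p a b => (h p a b).symm) not_false
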